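/- arXiv:2602.09711 — 2 statements merged into one kernel-verified Lean document; each statement's English description precedes it below -/
import Mathlib

section
/- Let (X^n, Y^n) be jointly distributed random sequences with finite alphabets. The directed information has the Kullback–Leibler divergence representation I(X^n→Y^n) = D(P_{X^n,Y^n} ‖ P_{X^n‖Y^{n-1}} · P_{Y^n}), where the second argument is the pmf (x^n,y^n) ↦ P(x^n‖y^{n-1}) · P(y^n). -/
open Finset

noncomputable section

-- Probability of the event `E` under the pmf `p` on a finite sample space `Ω`.
open Classical in
def pr {Ω : Type*} [Fintype Ω] (p : Ω → ℝ) (E : Ω → Prop) : ℝ :=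
  ∑ ω, if E ω then p ω else 0

-- Shannon entropy `H(U)` (pointwise form).
def entropy {Ω α : Type*} [Fintype Ω] (p : Ω → ℝ) (U : Ω → α) : ℝ :=
  -∑ ω, p ω * Real.log (pr p (fun ω' => U ω' = U ω))

-- Conditional Shannon entropy `H(U | V)`.
def condEntropy {Ω α β : Type*} [Fintype Ω] (p : Ω → ℝ) (U : Ω → α) (V : Ω → β) : ℝ :=
  -∑ ω, p ω * Real.log
      (pr p (fun ω' => U ω' = U ω ∧ V ω' = V ω) / pr p (fun ω' => V ω' = V ω))

-- Mutual information `I(U ; V)`.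
def mutualInfo {Ω α β : Type*} [Fintype Ω] (p : Ω → ℝ) (U : Ω → α) (V : Ω → β) : ℝ :=
  ∑ ω, p ω * Real.log
      (pr p (fun ω' => U ω' = U ω ∧ V ω' = V ω) /
        (pr p (fun ω' => U ω' = U ω) * pr p (fun ω' => V ω' = V ω)))

-- Conditional mutual information `I(U ; V | W)`.
def condMutualInfo {Ω α β γ : Type*} [Fintype Ω] (p : Ω → ℝ)
    (U : Ω → α) (V : Ω → β) (W : Ω → γ) : ℝ :=
  ∑ ω, p ω * Real.log
      ((pr p (fun ω' => U ω' = U ω ∧ V ω' = V ω ∧ W ω' = W ω) *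
          pr p (fun ω' => W ω' = W ω)) /
        (pr p (fun ω' => U ω' = U ω ∧ W ω' = W ω) *
          pr p (fun ω' => V ω' = V ω ∧ W ω' = W ω)))

-- The prefix `(X_0, …, X_{i-1})` of a random sequence `X`.
def prefixSeq {Ω 𝒳 : Type*} (X : Ω → ℕ → 𝒳) (i : ℕ) : Ω → (Fin i → 𝒳) :=
  fun ω j => X ω (j : ℕ)

-- Directed information `I(X^n → Y^n) = ∑_{i=1}^n I(X^i ; Y_i | Y^{i-1})` (0-indexed).
def directedInfo {Ω 𝒳 𝒴 : Type*} [Fintype Ω] (p : Ω → ℝ)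
    (X : Ω → ℕ → 𝒳) (Y : Ω → ℕ → 𝒴) (n : ℕ) : ℝ :=
  ∑ i ∈ Finset.range n,
    condMutualInfo p (prefixSeq X (i + 1)) (fun ω => Y ω i) (prefixSeq Y i)

lemma pr_congr {Ω : Type*} [Fintype Ω] (p : Ω → ℝ) (E F : Ω → Prop)
    (h : ∀ ω, E ω ↔ F ω) : pr p E = pr p F := by
  classical
  unfold pr
  exact Finset.sum_congr rfl fun ω _ => by
    rcases (h ω) with ⟨h1, h2⟩
    by_cases hE : E ω
    · rw [if_pos hE, if_pos (h1 hE)]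
    · rw [if_neg hE, if_neg (fun hF => hE (h2 hF))]

lemma pr_pos {Ω : Type*} [Fintype Ω] {p : Ω → ℝ} (hp0 : ∀ ω, 0 ≤ p ω)
    {E : Ω → Prop} {ω : Ω} (hE : E ω) (hω : 0 < p ω) : 0 < pr p E := by
  classical
  unfold pr
  refine Finset.sum_pos' (fun ω' _ => ?_) ⟨ω, Finset.mem_univ ω, ?_⟩
  · split <;> simp [hp0 ω']
  · simpa [hE] using hω

lemma pr_true {Ω : Type*} [Fintype Ω] {p : Ω → ℝ} (hp1 : ∑ ω, p ω = 1)
    {E : Ω → Prop} (h : ∀ ω, E ω) : pr p E = 1 := by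
  unfold pr
  rw [Finset.sum_congr rfl fun ω' _ => if_pos (h ω')]
  exact hp1

lemma prefix_succ {Ω 𝒴 : Type*} (Y : Ω → ℕ → 𝒴) (i : ℕ) (ω' ω : Ω) :
    prefixSeq Y (i + 1) ω' = prefixSeq Y (i + 1) ω ↔
      Y ω' i = Y ω i ∧ prefixSeq Y i ω' = prefixSeq Y i ω := by
  simp only [funext_iff, prefixSeq]
  constructor
  · intro h
    exact ⟨h ⟨i, by omega⟩, fun j => h ⟨(j : ℕ), by omega⟩⟩
  · rintro ⟨h1, h2⟩ j
    rcases Nat.lt_succ_iff_lt_or_eq.1 j.2 with hj | hj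
    · exact h2 ⟨(j : ℕ), hj⟩
    · simpa [hj] using h1

lemma key (A B C : ℕ → ℝ) (n : ℕ) (hA : ∀ i, 0 < A i) (hB : ∀ i, 0 < B i)
    (hC : ∀ i, 0 < C i) (hA0 : A 0 = 1) (hB0 : B 0 = 1) :
    ∑ i ∈ Finset.range n, Real.log (A (i + 1) * B i / (C i * B (i + 1))) =
      Real.log (A n / ((∏ i ∈ Finset.range n, C i / A i) * B n)) := by
  have hprod : 0 < ∏ i ∈ Finset.range n, C i / A i :=
    Finset.prod_pos fun i _ => div_pos (hC i) (hA i)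
  rw [Real.log_div (ne_of_gt (hA n)) (ne_of_gt (mul_pos hprod (hB n))),
    Real.log_mul (ne_of_gt hprod) (ne_of_gt (hB n)),
    Real.log_prod (fun i _ => ne_of_gt (div_pos (hC i) (hA i)))]
  have hterm : ∀ i, Real.log (A (i + 1) * B i / (C i * B (i + 1))) =
      (Real.log (A (i + 1)) - Real.log (A i)) -
        (Real.log (C i) - Real.log (A i)) -
        (Real.log (B (i + 1)) - Real.log (B i)) := by
    intro i
    rw [Real.log_div (ne_of_gt (mul_pos (hA (i+1)) (hB i))) (ne_of_gt (mul_pos (hC i) (hB (i+1)))),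
      Real.log_mul (ne_of_gt (hA (i + 1))) (ne_of_gt (hB i)),
      Real.log_mul (ne_of_gt (hC i)) (ne_of_gt (hB (i + 1)))]
    ring
  simp only [hterm, Real.log_div (ne_of_gt (hC _)) (ne_of_gt (hA _))]
  rw [Finset.sum_sub_distrib, Finset.sum_sub_distrib,
    Finset.sum_range_sub (fun i => Real.log (A i)),
    Finset.sum_range_sub (fun i => Real.log (B i))]
  simp [hA0, hB0]
  ring

/-- the KL-divergence representation
`I(X^n→Y^n) = D(P_{X^n,Y^n} ‖ P_{X^n‖Y^{n-1}} · P_{Y^n})`, written here as the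
expectation over the joint pmf of the corresponding log-likelihood ratio
(terms of zero probability contribute `0`). -/
theorem directedInfo_eq_klDiv
    {Ω 𝒳 𝒴 : Type*} [Fintype Ω] [Fintype 𝒳] [Fintype 𝒴]
    (p : Ω → ℝ) (hp0 : ∀ ω, 0 ≤ p ω) (hp1 : ∑ ω, p ω = 1)
    (X : Ω → ℕ → 𝒳) (Y : Ω → ℕ → 𝒴) (n : ℕ) :
    directedInfo p X Y n =
      ∑ ω, p ω * Real.log
          (pr p (fun ω' => prefixSeq X n ω' = prefixSeq X n ω ∧
                prefixSeq Y n ω' = prefixSeq Y n ω) /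
            ((∏ i ∈ Finset.range n,
                pr p (fun ω' => prefixSeq X (i + 1) ω' = prefixSeq X (i + 1) ω ∧
                      prefixSeq Y i ω' = prefixSeq Y i ω) /
                  pr p (fun ω' => prefixSeq X i ω' = prefixSeq X i ω ∧
                        prefixSeq Y i ω' = prefixSeq Y i ω)) *
              pr p (fun ω' => prefixSeq Y n ω' = prefixSeq Y n ω))) := by
  classical
  unfold directedInfo condMutualInfo
  rw [Finset.sum_comm]
  refine Finset.sum_congr rfl fun ω _ => ?_
  by_cases hω : p ω = 0
  · simp [hω]
  have hpω : 0 < p ω := (hp0 ω).lt_of_ne (Ne.symm hω)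
  have h1 : ∀ i : ℕ, pr p (fun ω' => prefixSeq X (i + 1) ω' = prefixSeq X (i + 1) ω ∧
      Y ω' i = Y ω i ∧ prefixSeq Y i ω' = prefixSeq Y i ω) =
      pr p (fun ω' => prefixSeq X (i + 1) ω' = prefixSeq X (i + 1) ω ∧
        prefixSeq Y (i + 1) ω' = prefixSeq Y (i + 1) ω) := fun i =>
    pr_congr _ _ _ fun ω' => by rw [prefix_succ Y i ω' ω]
  have h2 : ∀ i : ℕ, pr p (fun ω' => Y ω' i = Y ω i ∧
      prefixSeq Y i ω' = prefixSeq Y i ω) =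
      pr p (fun ω' => prefixSeq Y (i + 1) ω' = prefixSeq Y (i + 1) ω) := fun i =>
    pr_congr _ _ _ fun ω' => (prefix_succ Y i ω' ω).symm
  simp only [h1, h2, ← Finset.mul_sum]
  congr 1
  exact key
    (fun i => pr p (fun ω' => prefixSeq X i ω' = prefixSeq X i ω ∧
      prefixSeq Y i ω' = prefixSeq Y i ω))
    (fun i => pr p (fun ω' => prefixSeq Y i ω' = prefixSeq Y i ω))
    (fun i => pr p (fun ω' => prefixSeq X (i + 1) ω' = prefixSeq X (i + 1) ω ∧
      prefixSeq Y i ω' = prefixSeq Y i ω))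
    n
    (fun i => pr_pos hp0 ⟨rfl, rfl⟩ hpω)
    (fun i => pr_pos hp0 rfl hpω)
    (fun i => pr_pos hp0 ⟨rfl, rfl⟩ hpω)
    (pr_true hp1 fun ω' => ⟨Subsingleton.elim _ _, Subsingleton.elim _ _⟩)
    (pr_true hp1 fun ω' => Subsingleton.elim _ _)
end
end

section
/- (Closed form of the Ising-channel optimal average reward) The equation x^3 = (1−x)^4 has a unique solution a in the interval [0,1]; this a lies in (0,1), and it satisfies 2·H₂(a)/(a+3) = −(1/2)·log₂(a), where H₂(x) = −x·log₂(x) − (1−x)·log₂(1−x) is the binary entropy function. -/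
open Finset

noncomputable section

-- The binary entropy function, base 2 (with `logb 2 0 = 0`).
def binaryEntropy (x : ℝ) : ℝ :=
  -(x * Real.logb 2 x) - (1 - x) * Real.logb 2 (1 - x)

/-- the equation `x^3 = (1−x)^4` has a unique solution `a` in `[0,1]`;
this `a` lies in `(0,1)` and satisfies `2·H₂(a)/(a+3) = −(1/2)·log₂ a`. -/
theorem ising_unique_root_and_closed_form :
    (∃! a : ℝ, a ∈ Set.Icc (0 : ℝ) 1 ∧ a ^ 3 = (1 - a) ^ 4) ∧
      ∀ a : ℝ, a ∈ Set.Icc (0 : ℝ) 1 → a ^ 3 = (1 - a) ^ 4 →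
        a ∈ Set.Ioo (0 : ℝ) 1 ∧
          2 * binaryEntropy a / (a + 3) = -(1 / 2) * Real.logb 2 a := by
  have mono : StrictMonoOn (fun x : ℝ => x ^ 3 - (1 - x) ^ 4) (Set.Icc 0 1) := by
    intro x hx y hy hxy
    have h1 : x ^ 3 < y ^ 3 := by
      exact pow_lt_pow_left₀ hxy hx.1 (by norm_num)
    have h2 : (1 - y) ^ 4 ≤ (1 - x) ^ 4 := by
      exact pow_le_pow_left₀ (by linarith [hy.2]) (by linarith) 4
    simp only
    linarith
  constructor
  · obtain ⟨a, ha, hfa⟩ : ∃ a ∈ Set.Icc (0:ℝ) 1,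
        (fun x : ℝ => x ^ 3 - (1 - x) ^ 4) a = 0 := by
      have hc : ContinuousOn (fun x : ℝ => x ^ 3 - (1 - x) ^ 4) (Set.Icc 0 1) := by
        fun_prop
      have hsub := intermediate_value_Icc (by norm_num : (0:ℝ) ≤ 1) hc
      have h0 : (0:ℝ) ∈ Set.Icc ((fun x : ℝ => x ^ 3 - (1 - x) ^ 4) 0)
          ((fun x : ℝ => x ^ 3 - (1 - x) ^ 4) 1) := by norm_num
      obtain ⟨a, ha, hfa⟩ := hsub h0
      exact ⟨a, ha, hfa⟩
    refine ⟨a, ⟨ha, by simp only at hfa; linarith⟩, ?_⟩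
    rintro b ⟨hb, hbeq⟩
    refine mono.injOn hb ha ?_
    simp only at hfa ⊢
    linarith
  · intro a ha heq
    obtain ⟨h0, h1⟩ := ha
    have ha0 : a ≠ 0 := by rintro rfl; norm_num at heq
    have ha1 : a ≠ 1 := by rintro rfl; norm_num at heq
    have hpos : 0 < a := lt_of_le_of_ne h0 (Ne.symm ha0)
    have hlt : a < 1 := lt_of_le_of_ne h1 ha1
    refine ⟨⟨hpos, hlt⟩, ?_⟩
    have hlog : Real.logb 2 (1 - a) = 3 / 4 * Real.logb 2 a := by
      have h := congrArg (Real.logb 2) heq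
      rw [Real.logb_pow, Real.logb_pow] at h
      push_cast at h
      linarith
    unfold binaryEntropy
    rw [hlog]
    have h3 : a + 3 ≠ 0 := by linarith
    field_simp
    ring
end
end
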